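/- Visser's ADN theorem: suppose δ is a partial computable function that is fixed point free, i.e. δ(n)↓ implies W_{δ(n)} ≠ W_n. Then for every partial computable function ψ there exists a total computable function f such that for every n: if ψ(n)↓ then W_{f(n)} = W_{ψ(n)}, and if ψ(n)↑ then δ(f(n))↑. -/

import Mathlib

/-- The `e`-th partial computable function in a standard numbering
satisfying the S-m-n theorem. -/
def phi (e : ℕ) : ℕ →. ℕ := (Denumerable.ofNat Nat.Partrec.Code e).eval

/-- The `e`-th computably enumerable set `W e = dom (phi e)`. -/
def W (e : ℕ) : Set ℕ := {n | (phi e n).Dom}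

open Nat.Partrec (Code)
open Nat.Partrec.Code

namespace VisserAux

/-- The "race" between `evaln s a n` and `evaln s b e`. -/
def opt (a b : Code) (n e s : ℕ) : Option ℕ :=
  (evaln s a n).orElse fun _ => evaln s b e

theorem mem_opt {a b : Code} {n e s m : ℕ} (h : m ∈ opt a b n e s) :
    m ∈ eval a n ∨ m ∈ eval b e := by
  unfold opt at h
  cases ha : evaln s a n with
  | none => simp [ha, Option.orElse] at h; exact Or.inr (evaln_sound h)
  | some y =>
      simp [ha, Option.orElse] at h
      subst h
      exact Or.inl (evaln_sound ha)

/-- The function computed by the fixed-point code. -/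
def F (a b : Code) (n e x : ℕ) : Part ℕ :=
  (Nat.rfindOpt fun s => opt a b n e s).bind fun m => phi m x

theorem F_partrec (a b : Code) :
    Partrec₂ fun (c : Code) (m : ℕ) =>
      F a b m.unpair.1 (Encodable.encode (c.curry m.unpair.1)) m.unpair.2 := by
  have hn : Computable fun q : Code × ℕ => q.2.unpair.1 :=
    (Primrec.fst.comp (Primrec.unpair.comp Primrec.snd)).to_comp
  have he : Computable fun q : Code × ℕ => Encodable.encode (q.1.curry q.2.unpair.1) :=
    (Primrec.encode.comp (primrec₂_curry.comp Primrec.fst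
      (Primrec.fst.comp (Primrec.unpair.comp Primrec.snd)))).to_comp
  have hx : Computable fun q : Code × ℕ => q.2.unpair.2 :=
    (Primrec.snd.comp (Primrec.unpair.comp Primrec.snd)).to_comp
  -- evaln as a primrec function of ((q, s)) pairs
  have heval1 : Primrec₂ fun (q : Code × ℕ) (s : ℕ) => evaln s a q.2.unpair.1 :=
    primrec_evaln.comp <| (Primrec.snd.pair (Primrec.const a)).pair
      (Primrec.fst.comp (Primrec.unpair.comp (Primrec.snd.comp Primrec.fst)))
  have heval2 : Primrec₂ fun (q : Code × ℕ) (s : ℕ) =>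
      evaln s b (Encodable.encode (q.1.curry q.2.unpair.1)) :=
    primrec_evaln.comp <| (Primrec.snd.pair (Primrec.const b)).pair
      (Primrec.encode.comp (primrec₂_curry.comp (Primrec.fst.comp Primrec.fst)
        (Primrec.fst.comp (Primrec.unpair.comp (Primrec.snd.comp Primrec.fst)))))
  have hopt : Computable₂ fun (q : Code × ℕ) (s : ℕ) =>
      opt a b q.2.unpair.1 (Encodable.encode (q.1.curry q.2.unpair.1)) s := by
    have : Primrec₂ fun (q : Code × ℕ) (s : ℕ) =>
        ((evaln s a q.2.unpair.1).orElse fun _ =>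
          evaln s b (Encodable.encode (q.1.curry q.2.unpair.1))) := by
      have := Primrec.option_orElse.comp (α := (Code × ℕ) × ℕ) heval1 heval2
      exact this
    exact this.to_comp
  have hrf : Partrec fun q : Code × ℕ =>
      Nat.rfindOpt fun s =>
        opt a b q.2.unpair.1 (Encodable.encode (q.1.curry q.2.unpair.1)) s :=
    Partrec.rfindOpt hopt
  have hbody : Partrec₂ fun (q : Code × ℕ) (m : ℕ) => phi m q.2.unpair.2 := by
    have : Partrec₂ fun (q : Code × ℕ) (m : ℕ) =>
        eval (Denumerable.ofNat Code m) q.2.unpair.2 :=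
      eval_part.comp ((Computable.ofNat Code).comp Computable.snd)
        (hx.comp Computable.fst)
    exact this
  exact hrf.bind hbody

end VisserAux

open VisserAux in
/-- Visser's ADN theorem. -/
theorem visser_adn (δ : ℕ →. ℕ) (hδ : Partrec δ)
    (hfpf : ∀ n : ℕ, ∀ y ∈ δ n, W y ≠ W n)
    (ψ : ℕ →. ℕ) (hψ : Partrec ψ) :
    ∃ f : ℕ → ℕ, Computable f ∧ ∀ n : ℕ,
      (∀ y ∈ ψ n, W (f n) = W y) ∧ (¬ (ψ n).Dom → ¬ (δ (f n)).Dom) := by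
  obtain ⟨a, ha⟩ := exists_code.1 (Partrec.nat_iff.1 hψ)
  obtain ⟨b, hb⟩ := exists_code.1 (Partrec.nat_iff.1 hδ)
  obtain ⟨c, hc⟩ := fixed_point₂ (F_partrec a b)
  set f : ℕ → ℕ := fun n => Encodable.encode (c.curry n) with hf
  have hfc : Computable f :=
    (Primrec.encode.comp (primrec₂_curry.comp (Primrec.const c) Primrec.id)).to_comp
  -- key equation: phi (f n) x = F a b n (f n) x
  have key : ∀ n x, phi (f n) x = F a b n (f n) x := by
    intro n x
    have h1 : phi (f n) x = eval (c.curry n) x := by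
      simp [phi, hf, Denumerable.ofNat_encode]
    rw [h1, eval_curry, hc]
    simp [hf]
  refine ⟨f, hfc, fun n => ?_⟩
  -- If the race converges to m, then W (f n) = W m and m ∈ ψ n
  have race : ∀ m, m ∈ Nat.rfindOpt (fun s => opt a b n (f n) s) →
      W (f n) = W m ∧ m ∈ ψ n := by
    intro m hm
    have hW : W (f n) = W m := by
      ext x
      have : phi (f n) x = phi m x := by
        rw [key n x]
        unfold F
        rw [Part.eq_some_iff.2 hm, Part.bind_some]
      simp only [W, Set.mem_setOf_eq, this]
    obtain ⟨s, hs⟩ := Nat.rfindOpt_spec hm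
    rcases mem_opt hs with h | h
    · exact ⟨hW, by rwa [ha] at h⟩
    · exfalso
      rw [hb] at h
      exact hfpf (f n) m h hW.symm
  constructor
  · intro y hy
    have hdom : (Nat.rfindOpt fun s => opt a b n (f n) s).Dom := by
      rw [← ha] at hy
      obtain ⟨k, hk⟩ := evaln_complete.1 hy
      refine Nat.rfindOpt_dom.2 ⟨k, y, ?_⟩
      unfold opt
      cases hae : evaln k a n with
      | none => rw [hae] at hk; exact absurd hk (by simp)
      | some z => rw [hae] at hk; simp at hk; subst hk; simp [hae, Option.orElse]
    obtain ⟨hWm, hmem⟩ := race _ (Part.get_mem hdom)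
    rw [Part.mem_unique hy hmem]
    exact hWm
  · intro hnd hd
    obtain ⟨v, hv⟩ := Part.dom_iff_mem.1 hd
    rw [← hb] at hv
    obtain ⟨k, hk⟩ := evaln_complete.1 hv
    have hdom : (Nat.rfindOpt fun s => opt a b n (f n) s).Dom := by
      refine Nat.rfindOpt_dom.2 ⟨k, v, ?_⟩
      unfold opt
      cases hae : evaln k a n with
      | none => simpa using hk
      | some z =>
        exfalso
        have : z ∈ ψ n := by rw [← ha]; exact evaln_sound (by simpa using hae)
        exact hnd (Part.dom_iff_mem.2 ⟨_, this⟩)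
    obtain ⟨_, hmem⟩ := race _ (Part.get_mem hdom)
    exact hnd (Part.dom_iff_mem.2 ⟨_, hmem⟩)
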